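/- Let K ≥ 2 be even, let m ≥ 1 be an integer, set N = mK, and let α ∈ [0,2]. Let S_0 = { (j, 2m−j, j, 2m−j, …, j, 2m−j) : j = 0, 1, …, 2m } be the set of 2m+1 pure strategies that assign j to every odd-indexed battlefield and 2m−j to every even-indexed battlefield. Then the mixed strategy given by uniform randomization over S_0 is a symmetric equilibrium strategy of the Colonel Blotto game B_α(N,K), and in the resulting equilibrium each player's expected payoff equals K·(m + α/2)/(2m + 1). -/

import Mathlib

open Finset

/-- The set of pure strategies: allocations of `N` units of the resource
over `K` battlefields. -/
def pureStrats (K N : ℕ) : Finset (Fin K → ℕ) := Finset.Nat.antidiagonalTuple K N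

/-- Payoff in the Colonel Blotto game `B_α(N,K)` of playing `s` against `t`:
`π(s,t) = Σ_k [1_{s_k > t_k} + (α/2)·1_{s_k = t_k}]`. -/
noncomputable def payoff (α : ℝ) {K : ℕ} (s t : Fin K → ℕ) : ℝ :=
  ∑ k, ((if t k < s k then (1 : ℝ) else 0) + α / 2 * (if s k = t k then 1 else 0))

/-- `σ` is a mixed strategy: a probability distribution on the pure strategies. -/
def IsMixed (K N : ℕ) (σ : (Fin K → ℕ) → ℝ) : Prop :=
  (∀ s, 0 ≤ σ s) ∧ (∀ s, s ∉ pureStrats K N → σ s = 0) ∧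
    ∑ s ∈ pureStrats K N, σ s = 1

/-- Expected payoff of the mixed strategy `σ` against the mixed strategy `τ`. -/
noncomputable def expPayoff (α : ℝ) (K N : ℕ) (σ τ : (Fin K → ℕ) → ℝ) : ℝ :=
  ∑ s ∈ pureStrats K N, ∑ t ∈ pureStrats K N, σ s * τ t * payoff α s t

/-- `(σA, σB)` is a mixed-strategy Nash equilibrium: both are mixed strategies and
neither player can strictly improve by a unilateral deviation. -/
def IsNashEq (α : ℝ) (K N : ℕ) (σA σB : (Fin K → ℕ) → ℝ) : Prop :=
  IsMixed K N σA ∧ IsMixed K N σB ∧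
    (∀ σ', IsMixed K N σ' → expPayoff α K N σ' σB ≤ expPayoff α K N σA σB) ∧
    (∀ τ', IsMixed K N τ' → expPayoff α K N τ' σA ≤ expPayoff α K N σB σA)

/-- The marginal distribution of `σ` at battlefield `k`, evaluated at `x`. -/
noncomputable def marginal (K N : ℕ) (σ : (Fin K → ℕ) → ℝ) (k : Fin K) (x : ℕ) : ℝ :=
  ∑ s ∈ (pureStrats K N).filter (fun s => s k = x), σ s

/-- `σ` induces uniform marginals on `{0,1,…,2m}` at every battlefield. -/
def UniformMarginals (K N m : ℕ) (σ : (Fin K → ℕ) → ℝ) : Prop :=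
  ∀ k x, marginal K N σ k x = if x ≤ 2 * m then (1 : ℝ) / (2 * m + 1) else 0

/- Uniform randomization over the set `S₀` of the `2m+1` pure strategies that assign
`j` to every odd-indexed battlefield and `2m − j` to every even-indexed battlefield,
for `j = 0,1,…,2m` (battlefields are indexed `0,…,K−1`, so odd-indexed battlefields
in 1-based counting are the even indices here). -/
open Classical in
noncomputable def sigma0 (K m : ℕ) : (Fin K → ℕ) → ℝ := fun s =>
  if ∃ j ≤ 2 * m, s = fun k : Fin K => if (k : ℕ) % 2 = 0 then j else 2 * m - j
  then (1 : ℝ) / (2 * m + 1) else 0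

def strat (K m j : ℕ) : Fin K → ℕ := fun k => if (k : ℕ) % 2 = 0 then j else 2 * m - j

lemma sum_parity (c a b : ℕ) :
    ∑ i ∈ range (2 * c), (if i % 2 = 0 then a else b) = c * (a + b) := by
  induction c with
  | zero => simp
  | succ n ih =>
    have h1 : 2 * (n + 1) = (2 * n + 1) + 1 := by ring
    rw [h1, Finset.sum_range_succ, Finset.sum_range_succ, ih]
    have h2 : (2 * n) % 2 = 0 := by omega
    have h3 : (2 * n + 1) % 2 = 1 := by omega
    simp only [h2, h3, if_true, if_pos rfl]
    norm_num
    ring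

noncomputable def gfun (m : ℕ) (α : ℝ) (x : ℕ) : ℝ :=
  ((min x (2 * m + 1) : ℕ) : ℝ) + α / 2 * (if x ≤ 2 * m then 1 else 0)

lemma sum_g (m : ℕ) (α : ℝ) (x : ℕ) :
    ∑ j ∈ range (2 * m + 1),
      ((if j < x then (1 : ℝ) else 0) + α / 2 * (if x = j then 1 else 0))
      = gfun m α x := by
  rw [Finset.sum_add_distrib, ← Finset.mul_sum]
  have h1 : ∑ j ∈ range (2 * m + 1), (if j < x then (1 : ℝ) else 0)
      = ((min x (2 * m + 1) : ℕ) : ℝ) := by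
    rw [Finset.sum_boole]
    congr 1
    have : (range (2 * m + 1)).filter (fun j => j < x) = range (min x (2 * m + 1)) := by
      ext j; simp only [mem_filter, mem_range, lt_min_iff]; omega
    rw [this, Finset.card_range]
  have h2 : ∑ j ∈ range (2 * m + 1), (if x = j then (1 : ℝ) else 0)
      = if x ≤ 2 * m then 1 else 0 := by
    rw [Finset.sum_ite_eq (range (2 * m + 1)) x (fun _ => (1 : ℝ))]
    congr 1
    simp [Nat.lt_succ_iff]
  rw [h1, h2, gfun]

lemma strat_mem {K m N : ℕ} (hKeven : Even K) (hN : N = m * K) {j : ℕ} (hj : j ≤ 2 * m) :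
    strat K m j ∈ pureStrats K N := by
  obtain ⟨c, hc⟩ := hKeven
  have hK2 : K = 2 * c := by omega
  rw [pureStrats, Finset.Nat.mem_antidiagonalTuple]
  have h : ∑ k : Fin K, strat K m j k
      = ∑ i ∈ range K, (if i % 2 = 0 then j else 2 * m - j) :=
    Fin.sum_univ_eq_sum_range (fun i => if i % 2 = 0 then j else 2 * m - j) K
  rw [h, hK2, sum_parity]
  have : j + (2 * m - j) = 2 * m := by omega
  rw [this, hN, hK2]; ring

lemma strat_injOn (K m : ℕ) (hK : 2 ≤ K) :
    Set.InjOn (strat K m) (range (2 * m + 1)) := by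
  intro a _ b _ h
  have h0 := congrFun h ⟨0, by omega⟩
  simpa [strat] using h0

lemma sigma0_eq (K m : ℕ) (s : Fin K → ℕ) :
    sigma0 K m s
      = if s ∈ (range (2 * m + 1)).image (strat K m) then (1 : ℝ) / (2 * m + 1) else 0 := by
  unfold sigma0
  apply if_congr _ rfl rfl
  simp only [Finset.mem_image, Finset.mem_range, Nat.lt_succ_iff, strat]
  constructor
  · rintro ⟨j, hj, rfl⟩; exact ⟨j, hj, rfl⟩
  · rintro ⟨j, hj, rfl⟩; exact ⟨j, hj, rfl⟩

lemma payoff_strat_sum (K m : ℕ) (α : ℝ) (s : Fin K → ℕ) :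
    ∑ j ∈ range (2 * m + 1), payoff α s (strat K m j) = ∑ k : Fin K, gfun m α (s k) := by
  unfold payoff
  rw [Finset.sum_comm]
  refine Finset.sum_congr rfl (fun k _ => ?_)
  rcases Nat.even_or_odd (k : ℕ) with he | ho
  · have hk : (k : ℕ) % 2 = 0 := Nat.even_iff.mp he
    simp only [strat, hk, if_true]
    exact sum_g m α (s k)
  · have hk : ¬ ((k : ℕ) % 2 = 0) := by
      have := Nat.odd_iff.mp ho; omega
    simp only [strat, hk, if_false]
    have hrefl := Finset.sum_range_reflect
      (fun v => (if v < s k then (1 : ℝ) else 0) + α / 2 * (if s k = v then 1 else 0))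
      (2 * m + 1)
    simp only [Nat.add_sub_cancel] at hrefl
    rw [hrefl]
    exact sum_g m α (s k)

lemma innerSum0 (K m N : ℕ) (hK : 2 ≤ K) (hKeven : Even K) (hN : N = m * K) (α : ℝ)
    (s : Fin K → ℕ) :
    ∑ t ∈ pureStrats K N, sigma0 K m t * payoff α s t
      = (1 / (2 * (m : ℝ) + 1)) * ∑ k : Fin K, gfun m α (s k) := by
  set T := (range (2 * m + 1)).image (strat K m) with hT
  have hsub : T ⊆ pureStrats K N := by
    intro t ht
    obtain ⟨j, hj, rfl⟩ := Finset.mem_image.mp ht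
    exact strat_mem hKeven hN (by simpa [Nat.lt_succ_iff] using hj)
  have h0 : ∀ t ∈ pureStrats K N, t ∉ T → sigma0 K m t * payoff α s t = 0 := by
    intro t _ ht
    rw [sigma0_eq, if_neg ht, zero_mul]
  rw [← Finset.sum_subset hsub h0]
  have hcast : ((2 * m + 1 : ℕ) : ℝ) = 2 * (m : ℝ) + 1 := by push_cast; ring
  calc ∑ t ∈ T, sigma0 K m t * payoff α s t
      = ∑ t ∈ T, (1 / (2 * (m : ℝ) + 1)) * payoff α s t := by
        refine Finset.sum_congr rfl (fun t ht => ?_)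
        rw [sigma0_eq, if_pos ht]
    _ = ∑ j ∈ range (2 * m + 1), (1 / (2 * (m : ℝ) + 1)) * payoff α s (strat K m j) := by
        rw [hT, Finset.sum_image (fun a ha b hb h => strat_injOn K m hK ha hb h)]
    _ = (1 / (2 * (m : ℝ) + 1)) * ∑ j ∈ range (2 * m + 1), payoff α s (strat K m j) := by
        rw [Finset.mul_sum]
    _ = _ := by rw [payoff_strat_sum]

lemma gfun_le (m : ℕ) (α : ℝ) (hα : 0 ≤ α) (x : ℕ) : gfun m α x ≤ (x : ℝ) + α / 2 := by
  unfold gfun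
  by_cases hx : x ≤ 2 * m
  · rw [if_pos hx, min_eq_left (by omega), mul_one]
  · rw [if_neg hx, min_eq_right (by omega), mul_zero, add_zero]
    have : (2 * m + 1 : ℕ) ≤ x := by omega
    have h2 : ((2 * m + 1 : ℕ) : ℝ) ≤ (x : ℝ) := by exact_mod_cast this
    linarith

lemma gfun_eq (m : ℕ) (α : ℝ) (x : ℕ) (hx : x ≤ 2 * m) : gfun m α x = (x : ℝ) + α / 2 := by
  unfold gfun
  rw [if_pos hx, min_eq_left (by omega), mul_one]

lemma sum_cast_eq {K N : ℕ} {s : Fin K → ℕ} (hs : s ∈ pureStrats K N) :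
    ∑ k : Fin K, ((s k : ℝ)) = (N : ℝ) := by
  have := Finset.Nat.mem_antidiagonalTuple.mp hs
  exact_mod_cast congrArg (Nat.cast : ℕ → ℝ) this

lemma sum_gfun_le {K m N : ℕ} (α : ℝ) (hα : 0 ≤ α) {s : Fin K → ℕ}
    (hs : s ∈ pureStrats K N) :
    ∑ k : Fin K, gfun m α (s k) ≤ (N : ℝ) + (K : ℝ) * (α / 2) := by
  have h1 : ∑ k : Fin K, gfun m α (s k) ≤ ∑ k : Fin K, ((s k : ℝ) + α / 2) :=
    Finset.sum_le_sum (fun k _ => gfun_le m α hα (s k))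
  rw [Finset.sum_add_distrib, sum_cast_eq hs, Finset.sum_const, Finset.card_univ,
    Fintype.card_fin, nsmul_eq_mul] at h1
  exact h1

lemma sum_gfun_strat {K m N : ℕ} (hKeven : Even K) (hN : N = m * K) (α : ℝ)
    {j : ℕ} (hj : j ≤ 2 * m) :
    ∑ k : Fin K, gfun m α (strat K m j k) = (N : ℝ) + (K : ℝ) * (α / 2) := by
  have h1 : ∀ k : Fin K, gfun m α (strat K m j k) = ((strat K m j k : ℝ)) + α / 2 := by
    intro k
    apply gfun_eq
    unfold strat
    split <;> omega
  rw [Finset.sum_congr rfl (fun k _ => h1 k), Finset.sum_add_distrib,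
    sum_cast_eq (strat_mem hKeven hN hj), Finset.sum_const, Finset.card_univ,
    Fintype.card_fin, nsmul_eq_mul]

lemma card_T (K m : ℕ) (hK : 2 ≤ K) :
    ((range (2 * m + 1)).image (strat K m)).card = 2 * m + 1 := by
  rw [Finset.card_image_of_injOn (strat_injOn K m hK), Finset.card_range]

lemma mpos (m : ℕ) : (0 : ℝ) < 2 * (m : ℝ) + 1 := by positivity

lemma sigma0_mixed (K m N : ℕ) (hK : 2 ≤ K) (hKeven : Even K) (hN : N = m * K) :
    IsMixed K N (sigma0 K m) := by
  set T := (range (2 * m + 1)).image (strat K m) with hT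
  have hsub : T ⊆ pureStrats K N := by
    intro t ht
    obtain ⟨j, hj, rfl⟩ := Finset.mem_image.mp ht
    exact strat_mem hKeven hN (by simpa [Nat.lt_succ_iff] using hj)
  refine ⟨fun s => ?_, fun s hs => ?_, ?_⟩
  · rw [sigma0_eq]; split
    · positivity
    · exact le_rfl
  · rw [sigma0_eq, if_neg (fun h => hs (hsub h))]
  · have h0 : ∀ s ∈ pureStrats K N, s ∉ T → sigma0 K m s = 0 := by
      intro s _ hsT; rw [sigma0_eq, if_neg hsT]
    rw [← Finset.sum_subset hsub h0]
    have : ∀ s ∈ T, sigma0 K m s = 1 / (2 * (m : ℝ) + 1) := by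
      intro s hs; rw [sigma0_eq, if_pos hs]
    rw [Finset.sum_congr rfl this, Finset.sum_const, card_T K m hK, nsmul_eq_mul]
    push_cast
    field_simp

lemma exp_le (K m N : ℕ) (hK : 2 ≤ K) (hKeven : Even K) (hN : N = m * K)
    (α : ℝ) (hα : 0 ≤ α) (σ' : (Fin K → ℕ) → ℝ) (hσ' : IsMixed K N σ') :
    expPayoff α K N σ' (sigma0 K m)
      ≤ ((N : ℝ) + (K : ℝ) * (α / 2)) / (2 * (m : ℝ) + 1) := by
  obtain ⟨hpos, hsupp, hsum⟩ := hσ'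
  have step : expPayoff α K N σ' (sigma0 K m)
      = ∑ s ∈ pureStrats K N,
          σ' s * ((1 / (2 * (m : ℝ) + 1)) * ∑ k : Fin K, gfun m α (s k)) := by
    unfold expPayoff
    refine Finset.sum_congr rfl (fun s _ => ?_)
    rw [← innerSum0 K m N hK hKeven hN α s, Finset.mul_sum]
    exact Finset.sum_congr rfl (fun t _ => by ring)
  rw [step]
  have hbound : ∀ s ∈ pureStrats K N,
      σ' s * ((1 / (2 * (m : ℝ) + 1)) * ∑ k : Fin K, gfun m α (s k))
        ≤ σ' s * (((N : ℝ) + (K : ℝ) * (α / 2)) / (2 * (m : ℝ) + 1)) := by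
    intro s hs
    apply mul_le_mul_of_nonneg_left _ (hpos s)
    have heq : (1 / (2 * (m : ℝ) + 1)) * ∑ k : Fin K, gfun m α (s k)
        = (∑ k : Fin K, gfun m α (s k)) / (2 * (m : ℝ) + 1) := by ring
    rw [heq]
    have hc := mpos m
    gcongr
    exact sum_gfun_le α hα hs
  calc ∑ s ∈ pureStrats K N, σ' s * ((1 / (2 * (m : ℝ) + 1)) * ∑ k : Fin K, gfun m α (s k))
      ≤ ∑ s ∈ pureStrats K N, σ' s * (((N : ℝ) + (K : ℝ) * (α / 2)) / (2 * (m : ℝ) + 1)) :=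
        Finset.sum_le_sum hbound
    _ = (((N : ℝ) + (K : ℝ) * (α / 2)) / (2 * (m : ℝ) + 1)) := by
        rw [← Finset.sum_mul, hsum, one_mul]

lemma exp_eq (K m N : ℕ) (hK : 2 ≤ K) (hKeven : Even K) (hN : N = m * K) (α : ℝ) :
    expPayoff α K N (sigma0 K m) (sigma0 K m)
      = ((N : ℝ) + (K : ℝ) * (α / 2)) / (2 * (m : ℝ) + 1) := by
  set T := (range (2 * m + 1)).image (strat K m) with hT
  have hsub : T ⊆ pureStrats K N := by
    intro t ht
    obtain ⟨j, hj, rfl⟩ := Finset.mem_image.mp ht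
    exact strat_mem hKeven hN (by simpa [Nat.lt_succ_iff] using hj)
  have step : expPayoff α K N (sigma0 K m) (sigma0 K m)
      = ∑ s ∈ pureStrats K N,
          sigma0 K m s * ((1 / (2 * (m : ℝ) + 1)) * ∑ k : Fin K, gfun m α (s k)) := by
    unfold expPayoff
    refine Finset.sum_congr rfl (fun s _ => ?_)
    rw [← innerSum0 K m N hK hKeven hN α s, Finset.mul_sum]
    exact Finset.sum_congr rfl (fun t _ => by ring)
  rw [step]
  have h0 : ∀ s ∈ pureStrats K N, s ∉ T →
      sigma0 K m s * ((1 / (2 * (m : ℝ) + 1)) * ∑ k : Fin K, gfun m α (s k)) = 0 := by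
    intro s _ hsT; rw [sigma0_eq, if_neg hsT, zero_mul]
  rw [← Finset.sum_subset hsub h0]
  have hval : ∀ s ∈ T,
      sigma0 K m s * ((1 / (2 * (m : ℝ) + 1)) * ∑ k : Fin K, gfun m α (s k))
        = (1 / (2 * (m : ℝ) + 1)) * ((1 / (2 * (m : ℝ) + 1)) * ((N : ℝ) + (K : ℝ) * (α / 2))) := by
    intro s hs
    obtain ⟨j, hj, rfl⟩ := Finset.mem_image.mp hs
    rw [sigma0_eq, if_pos hs, sum_gfun_strat hKeven hN α (by simpa [Nat.lt_succ_iff] using hj)]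
  rw [Finset.sum_congr rfl hval, Finset.sum_const, card_T K m hK, nsmul_eq_mul]
  have := mpos m
  push_cast
  field_simp

theorem stmt1 (K m N : ℕ) (hK : 2 ≤ K) (hKeven : Even K) (hm : 1 ≤ m) (hN : N = m * K)
    (α : ℝ) (hα : α ∈ Set.Icc (0 : ℝ) 2) :
    IsNashEq α K N (sigma0 K m) (sigma0 K m) ∧
    expPayoff α K N (sigma0 K m) (sigma0 K m)
      = (K : ℝ) * ((m : ℝ) + α / 2) / (2 * (m : ℝ) + 1) := by
  have hmix := sigma0_mixed K m N hK hKeven hN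
  have hval := exp_eq K m N hK hKeven hN α
  constructor
  · refine ⟨hmix, hmix, fun σ' h => ?_, fun τ' h => ?_⟩
    · rw [hval]; exact exp_le K m N hK hKeven hN α hα.1 σ' h
    · rw [hval]; exact exp_le K m N hK hKeven hN α hα.1 τ' h
  · rw [hval, hN]
    push_cast
    ring
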